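/- Let ρ be a pseudometric on 𝔐 which is continuous with respect to the sup metric and invariant under the Homeo⁺[0,1]-action (ρ(ξ∘g, ζ∘g) = ρ(ξ,ζ) for all g ∈ Homeo⁺[0,1]). If (α,β) and (γ,δ) are ρ-gaps with (α,β) ∩ (γ,δ) ≠ ∅, then their union, the interval (min(α,γ), max(β,δ)), is also a ρ-gap. -/

import Mathlib

/-- The space `𝔐` of continuous weakly increasing surjections of `[0,1]`, with the
sup metric (inherited from `C([0,1],[0,1])`). -/
def M : Type :=
  {f : C(unitInterval, unitInterval) // Monotone f ∧ Function.Surjective f}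

noncomputable instance : MetricSpace M := Subtype.metricSpace

/-- Right composition of `ξ ∈ 𝔐` with an increasing self-homeomorphism `g` of `[0,1]`,
i.e. the action of `g⁻¹ ∈ Homeo⁺[0,1]` on `ξ`. -/
def Mcomp (ξ : M) (g : unitInterval ≃ₜ unitInterval) (hg : Monotone g) : M :=
  ⟨(ξ.1).comp ⟨⇑g, g.continuous⟩, by
    constructor
    · intro a b hab
      exact ξ.2.1 (hg hab)
    · intro y
      obtain ⟨x, hx⟩ := ξ.2.2 y
      exact ⟨g.symm x, by simpa using hx⟩⟩

/-- `(α,β)` is a `ρ`-gap: a nonempty open subinterval of `(0,1)` for which there are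
`ξ, ζ ∈ 𝔐` with `ρ(ξ,ζ) = 0` and, for every `s`, `ξ(s) ≤ α` or `ζ(s) ≥ β`. -/
def IsGap (ρ : M → M → ℝ) (α β : ℝ) : Prop :=
  0 ≤ α ∧ α < β ∧ β ≤ 1 ∧
    ∃ ξ ζ : M, ρ ξ ζ = 0 ∧ ∀ s : unitInterval, (ξ.1 s : ℝ) ≤ α ∨ β ≤ (ζ.1 s : ℝ)

/-- `U_ρ`, the union of all `ρ`-gaps. -/
def Urho (ρ : M → M → ℝ) : Set ℝ :=
  {t | ∃ α β : ℝ, IsGap ρ α β ∧ t ∈ Set.Ioo α β}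


open Set Function unitInterval

lemma aux_bot (f : unitInterval → unitInterval) (hm : Monotone f) (hs : Surjective f) :
    f 0 = 0 := by
  obtain ⟨a, ha⟩ := hs 0
  have h2 : f 0 ≤ f a := hm (unitInterval.nonneg' : (0:unitInterval) ≤ a)
  rw [ha] at h2
  exact le_antisymm h2 unitInterval.nonneg'

lemma aux_top (f : unitInterval → unitInterval) (hm : Monotone f) (hs : Surjective f) :
    f 1 = 1 := by
  obtain ⟨a, ha⟩ := hs 1
  have h2 : f a ≤ f 1 := hm (unitInterval.le_one' : a ≤ 1)
  rw [ha] at h2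
  exact le_antisymm unitInterval.le_one' h2

lemma aux_surj (f : unitInterval → unitInterval) (hc : Continuous f) (h0 : f 0 = 0)
    (h1 : f 1 = 1) : Surjective f := by
  intro y
  have hpc : IsPreconnected (range fun s : unitInterval => (f s : ℝ)) :=
    isPreconnected_range (continuous_subtype_val.comp hc)
  have h0' : (0:ℝ) ∈ range fun s : unitInterval => (f s : ℝ) := ⟨0, by show ((f 0 : unitInterval) : ℝ) = 0; rw [h0]; exact Icc.coe_zero⟩
  have h1' : (1:ℝ) ∈ range fun s : unitInterval => (f s : ℝ) := ⟨1, by show ((f 1 : unitInterval) : ℝ) = 1; rw [h1]; exact Icc.coe_one⟩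
  obtain ⟨s, hs⟩ := hpc.Icc_subset h0' h1' y.2
  exact ⟨s, Subtype.ext hs⟩

lemma aux_point (f g : unitInterval → unitInterval) (hfc : Continuous f) (hgc : Continuous g)
    (hf0 : f 0 = 0) (hg1 : g 1 = 1) {α β : ℝ} (hα : 0 ≤ α) (hβ : β ≤ 1)
    (hsep : ∀ s, (f s : ℝ) ≤ α ∨ β ≤ (g s : ℝ)) :
    ∃ s, (f s : ℝ) ≤ α ∧ β ≤ (g s : ℝ) := by
  by_contra h
  push_neg at h
  set S := {s : unitInterval | (f s : ℝ) ≤ α} with hS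
  have hSc : IsClosed S := isClosed_le (continuous_subtype_val.comp hfc) continuous_const
  have hTc : IsClosed {s : unitInterval | β ≤ (g s : ℝ)} :=
    isClosed_le continuous_const (continuous_subtype_val.comp hgc)
  have hcompl : S = {s : unitInterval | β ≤ (g s : ℝ)}ᶜ := by
    ext s
    simp only [hS, mem_setOf_eq, mem_compl_iff, not_le]
    constructor
    · intro hfs
      exact lt_of_le_of_lt (le_refl _) ((h s hfs))
    · intro hgs
      rcases hsep s with h1 | h2
      · exact h1
      · exact absurd h2 (not_le.mpr hgs)
  have hclopen : IsClopen S := ⟨hSc, hcompl ▸ hTc.isOpen_compl⟩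
  rcases isClopen_iff.mp hclopen with he | hu
  · have : (0:unitInterval) ∈ S := by
      simp only [hS, mem_setOf_eq, hf0, Icc.coe_zero]; exact hα
    rw [he] at this; exact this
  · have h1S : (1:unitInterval) ∈ S := hu ▸ mem_univ _
    have := h 1 h1S
    rw [hg1, Icc.coe_one] at this
    exact absurd hβ (not_le.mpr this)


/-- The monotone closed relation determined by `f` and `g`, cut at sum level `2s`. -/
def KK (f g : unitInterval → unitInterval) (s : unitInterval) : Set (unitInterval × unitInterval) :=
  {p | f p.1 = g p.2 ∧ (p.1 : ℝ) + (p.2 : ℝ) ≤ 2 * (s : ℝ)}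

def AA (f g : unitInterval → unitInterval) (s : unitInterval) : Set ℝ :=
  (fun p : unitInterval × unitInterval => ((p.1 : unitInterval) : ℝ)) '' KK f g s

noncomputable def mr (f g : unitInterval → unitInterval) (s : unitInterval) : ℝ :=
  sSup (AA f g s)

lemma zero_mem_KK {f g : unitInterval → unitInterval} (hf0 : f 0 = 0) (hg0 : g 0 = 0)
    (s : unitInterval) : ((0:unitInterval), (0:unitInterval)) ∈ KK f g s := by
  refine ⟨by rw [hf0, hg0], ?_⟩
  simp only [Icc.coe_zero, add_zero]
  have := s.2.1
  linarith

lemma AA_ne {f g : unitInterval → unitInterval} (hf0 : f 0 = 0) (hg0 : g 0 = 0)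
    (s : unitInterval) : (AA f g s).Nonempty :=
  ⟨0, ⟨(0,0), zero_mem_KK hf0 hg0 s, Icc.coe_zero⟩⟩

lemma AA_bdd (f g : unitInterval → unitInterval) (s : unitInterval) : BddAbove (AA f g s) :=
  ⟨1, fun x hx => by obtain ⟨p, _, rfl⟩ := hx; exact p.1.2.2⟩

lemma AA_closed {f g : unitInterval → unitInterval} (hfc : Continuous f) (hgc : Continuous g)
    (s : unitInterval) : IsClosed (AA f g s) := by
  have hK : IsClosed (KK f g s) := by
    apply IsClosed.inter
    · exact isClosed_eq (hfc.comp continuous_fst) (hgc.comp continuous_snd)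
    · exact isClosed_le ((continuous_subtype_val.comp continuous_fst).add
        (continuous_subtype_val.comp continuous_snd)) continuous_const
  exact (hK.isCompact.image (continuous_subtype_val.comp continuous_fst)).isClosed

lemma mr_mem {f g : unitInterval → unitInterval} (hfc : Continuous f) (hgc : Continuous g)
    (hf0 : f 0 = 0) (hg0 : g 0 = 0) (s : unitInterval) : mr f g s ∈ AA f g s :=
  (AA_closed hfc hgc s).csSup_mem (AA_ne hf0 hg0 s) (AA_bdd f g s)

lemma mr_nonneg {f g : unitInterval → unitInterval} (hf0 : f 0 = 0) (hg0 : g 0 = 0)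
    (s : unitInterval) : 0 ≤ mr f g s :=
  le_csSup (AA_bdd f g s) ⟨(0,0), zero_mem_KK hf0 hg0 s, Icc.coe_zero⟩

lemma mr_le_one {f g : unitInterval → unitInterval} (hf0 : f 0 = 0) (hg0 : g 0 = 0)
    (s : unitInterval) : mr f g s ≤ 1 :=
  csSup_le (AA_ne hf0 hg0 s) (fun x hx => by obtain ⟨p, _, rfl⟩ := hx; exact p.1.2.2)

lemma mr_mono {f g : unitInterval → unitInterval} (hf0 : f 0 = 0) (hg0 : g 0 = 0)
    {s s' : unitInterval} (hss : s ≤ s') : mr f g s ≤ mr f g s' := by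
  apply csSup_le_csSup (AA_bdd f g s') (AA_ne hf0 hg0 s)
  rintro x ⟨p, ⟨hpe, hps⟩, rfl⟩
  have : (s:ℝ) ≤ s' := hss
  exact ⟨p, ⟨hpe, by linarith⟩, rfl⟩

lemma mr_zero {f g : unitInterval → unitInterval} (hf0 : f 0 = 0) (hg0 : g 0 = 0) :
    mr f g 0 = 0 := by
  refine le_antisymm ?_ (mr_nonneg hf0 hg0 0)
  apply csSup_le (AA_ne hf0 hg0 0)
  rintro x ⟨p, ⟨hpe, hps⟩, rfl⟩
  have h1 : (0:ℝ) ≤ (p.2 : ℝ) := p.2.2.1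
  simp only [Icc.coe_zero, mul_zero] at hps
  linarith

lemma mr_one {f g : unitInterval → unitInterval} (hf0 : f 0 = 0) (hg0 : g 0 = 0)
    (hf1 : f 1 = 1) (hg1 : g 1 = 1) : mr f g 1 = 1 := by
  refine le_antisymm (mr_le_one hf0 hg0 1) ?_
  apply le_csSup (AA_bdd f g 1)
  exact ⟨(1,1), ⟨by rw [hf1, hg1], by simp [Icc.coe_one]; linarith⟩, Icc.coe_one⟩

lemma mr_lip {f g : unitInterval → unitInterval} (hfm : Monotone f) (hgm : Monotone g)
    (hgs : Surjective g) (hf0 : f 0 = 0) (hg0 : g 0 = 0)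
    {s s' : unitInterval} (hss : s ≤ s') :
    mr f g s' ≤ mr f g s + 2 * ((s':ℝ) - (s:ℝ)) := by
  apply csSup_le (AA_ne hf0 hg0 s')
  rintro x ⟨p, ⟨hpe, hps⟩, rfl⟩
  set c : ℝ := 2 * ((s':ℝ) - (s:ℝ)) with hc
  have hc0 : 0 ≤ c := by
    have : (s:ℝ) ≤ s' := hss
    simp only [hc]; linarith
  by_cases hcase : (p.1 : ℝ) - c ≤ 0
  · have := mr_nonneg hf0 hg0 s
    linarith
  · push_neg at hcase
    set t' : unitInterval := ⟨(p.1 : ℝ) - c, ⟨le_of_lt hcase, by have := p.1.2.2; linarith⟩⟩ with ht'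
    have ht'le : t' ≤ p.1 := by
      show ((p.1:ℝ) - c) ≤ (p.1:ℝ)
      linarith
    have hv'le : f t' ≤ g p.2 := hpe ▸ hfm ht'le
    set τ : unitInterval := surjInv hgs (f t') with hτ
    have hgτ : g τ = f t' := surjInv_eq hgs (f t')
    have key : ∃ τ' : unitInterval, f t' = g τ' ∧ τ' ≤ p.2 := by
      by_cases hτle : τ ≤ p.2
      · exact ⟨τ, hgτ.symm, hτle⟩
      · push_neg at hτle
        have h1 : g p.2 ≤ g τ := hgm (le_of_lt hτle)
        rw [hgτ] at h1
        exact ⟨p.2, le_antisymm hv'le h1, le_refl _⟩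
    obtain ⟨τ', hτ'e, hτ'le⟩ := key
    have hmem : ((t':ℝ)) ∈ AA f g s := by
      refine ⟨(t', τ'), ⟨hτ'e, ?_⟩, rfl⟩
      have h2 : (τ' : ℝ) ≤ (p.2 : ℝ) := hτ'le
      show ((p.1:ℝ) - c) + (τ':ℝ) ≤ 2 * (s:ℝ)
      simp only [hc] at *
      linarith
    have hle : ((t':ℝ)) ≤ mr f g s := le_csSup (AA_bdd f g s) hmem
    show (p.1 : ℝ) ≤ mr f g s + c
    have h3 : ((t':ℝ)) = (p.1:ℝ) - c := rfl
    linarith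

lemma mr_comb {f g : unitInterval → unitInterval} (hfc : Continuous f) (hgc : Continuous g)
    (hfm : Monotone f) (hgm : Monotone g) (hf0 : f 0 = 0) (hg0 : g 0 = 0) (s : unitInterval)
    {a b : unitInterval} (ha : (a:ℝ) = mr f g s) (hb : (b:ℝ) = mr g f s) :
    f a = g b := by
  obtain ⟨p, ⟨hpe, hps⟩, hp1⟩ := mr_mem hfc hgc hf0 hg0 s
  obtain ⟨q, ⟨hqe, hqs⟩, hq1⟩ := mr_mem hgc hfc hg0 hf0 s
  have hp1' : ((p.1:ℝ)) = mr f g s := hp1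
  have hq1' : ((q.1:ℝ)) = mr g f s := hq1
  have hap : a = p.1 := Subtype.ext (ha.trans hp1'.symm)
  have hbq : b = q.1 := Subtype.ext (hb.trans hq1'.symm)
  have hq2A : ((q.2:ℝ)) ∈ AA f g s := ⟨(q.2, q.1), ⟨hqe.symm, by linarith⟩, rfl⟩
  have hp2B : ((p.2:ℝ)) ∈ AA g f s := ⟨(p.2, p.1), ⟨hpe.symm, by linarith⟩, rfl⟩
  have h1 : ((q.2:ℝ)) ≤ ((p.1:ℝ)) := by rw [hp1']; exact le_csSup (AA_bdd f g s) hq2A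
  have h2 : ((p.2:ℝ)) ≤ ((q.1:ℝ)) := by rw [hq1']; exact le_csSup (AA_bdd g f s) hp2B
  have h1I : q.2 ≤ p.1 := Subtype.coe_le_coe.mp h1
  have h2I : p.2 ≤ q.1 := Subtype.coe_le_coe.mp h2
  have hA : f p.1 ≤ g q.1 := by rw [hpe]; exact hgm h2I
  have hB : g q.1 ≤ f p.1 := by rw [hqe]; exact hfm h1I
  rw [hap, hbq]
  exact le_antisymm hA hB

lemma mr_pt_le {f g : unitInterval → unitInterval} (hfm : Monotone f) (hgm : Monotone g)
    (hf0 : f 0 = 0) (hg0 : g 0 = 0) {t₁ t₂ s : unitInterval}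
    (hlt : (g t₂ : ℝ) < (f t₁ : ℝ)) (hs : 2 * (s:ℝ) ≤ (t₁:ℝ) + (t₂:ℝ)) :
    mr f g s ≤ (t₁:ℝ) := by
  apply csSup_le (AA_ne hf0 hg0 s)
  rintro x ⟨p, ⟨hpe, hps⟩, rfl⟩
  by_contra hcon
  push_neg at hcon
  have ht1p : t₁ ≤ p.1 := Subtype.coe_le_coe.mp (le_of_lt hcon)
  have hf1 : f t₁ ≤ f p.1 := hfm ht1p
  rw [hpe] at hf1
  have ht2p : (t₂:ℝ) < (p.2:ℝ) := by
    by_contra h2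
    push_neg at h2
    have : g p.2 ≤ g t₂ := hgm (Subtype.coe_le_coe.mp h2)
    have : (g p.2 : ℝ) ≤ g t₂ := this
    have hlt2 : (g t₂:ℝ) < g p.2 := lt_of_lt_of_le hlt hf1
    linarith
  linarith

lemma mr_pt_ge {f g : unitInterval → unitInterval} (hfm : Monotone f) (hfs : Surjective f)
    {t₁ t₂ s : unitInterval}
    (hlt : (g t₂ : ℝ) < (f t₁ : ℝ)) (hs : (t₁:ℝ) + (t₂:ℝ) ≤ 2 * (s:ℝ)) :
    (t₂:ℝ) ≤ mr g f s := by
  set τ : unitInterval := surjInv hfs (g t₂) with hτ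
  have hfτ : f τ = g t₂ := surjInv_eq hfs (g t₂)
  have hτt1 : (τ:ℝ) ≤ (t₁:ℝ) := by
    by_contra h
    push_neg at h
    have : f t₁ ≤ f τ := hfm (Subtype.coe_le_coe.mp (le_of_lt h))
    rw [hfτ] at this
    have : (f t₁ : ℝ) ≤ g t₂ := this
    linarith
  apply le_csSup (AA_bdd g f s)
  exact ⟨(t₂, τ), ⟨hfτ.symm, by linarith⟩, rfl⟩

lemma mr_cont {f g : unitInterval → unitInterval} (hfm : Monotone f) (hgm : Monotone g)
    (hgs : Surjective g) (hf0 : f 0 = 0) (hg0 : g 0 = 0) : Continuous (mr f g) := by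
  apply LipschitzWith.continuous (K := 2)
  apply LipschitzWith.of_dist_le_mul
  intro s s'
  rw [Real.dist_eq, Subtype.dist_eq, Real.dist_eq]
  have h2 : ((2:NNReal):ℝ) = 2 := by norm_num
  rw [h2]
  rcases le_total s s' with h | h
  · have hm := mr_mono hf0 hg0 (f := f) (g := g) h
    have hl := mr_lip hfm hgm hgs hf0 hg0 (f := f) (g := g) h
    have hss : (s:ℝ) ≤ (s':ℝ) := h
    have habs : |(s:ℝ) - (s':ℝ)| = (s':ℝ) - s := by
      rw [abs_sub_comm]; exact abs_of_nonneg (by linarith)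
    rw [habs]
    exact abs_le.mpr ⟨by linarith, by linarith⟩
  · have hm := mr_mono hf0 hg0 (f := f) (g := g) h
    have hl := mr_lip hfm hgm hgs hf0 hg0 (f := f) (g := g) h
    have hss : (s':ℝ) ≤ (s:ℝ) := h
    have habs : |(s:ℝ) - (s':ℝ)| = (s:ℝ) - s' := abs_of_nonneg (by linarith)
    rw [habs]
    exact abs_le.mpr ⟨by linarith, by linarith⟩


lemma aux_approx (u m : M) {ε : ℝ} (hε : 0 < ε) :
    ∃ (g : unitInterval ≃ₜ unitInterval) (hg : Monotone ⇑g),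
      ∀ t, dist (u.1 (g t)) (m.1 t) < ε := by
  set θ : ℝ := min (ε/3) (1/2) with hθdef
  have hθpos : 0 < θ := lt_min (by linarith) (by norm_num)
  have hθle : θ ≤ 1/2 := min_le_right _ _
  have hθε : θ ≤ ε/3 := min_le_left _ _
  have mem : ∀ (w : M) (t : unitInterval),
      (1-θ) * ((w.1 t : ℝ)) + θ * (t:ℝ) ∈ Set.Icc (0:ℝ) 1 := by
    intro w t
    constructor
    · have h1 := (w.1 t).2.1; have h2 := t.2.1; nlinarith
    · have h1 := (w.1 t).2.2; have h2 := t.2.2; nlinarith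
  set cvx : M → unitInterval → unitInterval :=
    fun w t => ⟨(1-θ) * ((w.1 t : ℝ)) + θ * (t:ℝ), mem w t⟩ with hcvx
  have hsm : ∀ w : M, StrictMono (cvx w) := by
    intro w a b hab
    show ((1-θ) * ((w.1 a : ℝ)) + θ * (a:ℝ)) < ((1-θ) * ((w.1 b : ℝ)) + θ * (b:ℝ))
    have h1 : (w.1 a : ℝ) ≤ w.1 b := Subtype.coe_le_coe.mpr (w.2.1 (le_of_lt hab))
    have h2 : (a:ℝ) < b := hab
    nlinarith
  have hcont : ∀ w : M, Continuous (cvx w) := by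
    intro w
    exact Continuous.subtype_mk ((continuous_const.mul
      (continuous_subtype_val.comp w.1.continuous)).add
      (continuous_const.mul continuous_subtype_val)) _
  have h0 : ∀ w : M, cvx w 0 = 0 := by
    intro w
    have hw0 : w.1 0 = 0 := aux_bot _ w.2.1 w.2.2
    apply Subtype.ext
    show (1-θ) * ((w.1 0 : ℝ)) + θ * (((0:unitInterval)):ℝ) = (((0:unitInterval)):ℝ)
    rw [hw0]; simp
  have h1 : ∀ w : M, cvx w 1 = 1 := by
    intro w
    have hw1 : w.1 1 = 1 := aux_top _ w.2.1 w.2.2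
    apply Subtype.ext
    show (1-θ) * ((w.1 1 : ℝ)) + θ * (((1:unitInterval)):ℝ) = (((1:unitInterval)):ℝ)
    rw [hw1]; simp
  have hsurj : ∀ w : M, Surjective (cvx w) := fun w => aux_surj _ (hcont w) (h0 w) (h1 w)
  have hbij : ∀ w : M, Function.Bijective (cvx w) := fun w => ⟨(hsm w).injective, hsurj w⟩
  set E : M → (unitInterval ≃ₜ unitInterval) :=
    fun w => Continuous.homeoOfEquivCompactToT2 (f := Equiv.ofBijective (cvx w) (hbij w))
      (hcont w) with hE
  have hEapp : ∀ w t, E w t = cvx w t := fun w t => rfl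
  set g : unitInterval ≃ₜ unitInterval := (E m).trans (E u).symm with hgdef
  have hsymmono : ∀ (w : M) (x y : unitInterval), x ≤ y → (E w).symm x ≤ (E w).symm y := by
    intro w x y hxy
    by_contra hcon
    push_neg at hcon
    have hlt := hsm w hcon
    have e1 : cvx w ((E w).symm y) = y := (E w).apply_symm_apply y
    have e2 : cvx w ((E w).symm x) = x := (E w).apply_symm_apply x
    rw [e1, e2] at hlt
    exact absurd hxy (not_le.mpr hlt)
  have hgmono : Monotone ⇑g := by
    intro a b hab
    show (E u).symm ((E m) a) ≤ (E u).symm ((E m) b)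
    exact hsymmono u _ _ ((hsm m).monotone hab)
  refine ⟨g, hgmono, ?_⟩
  intro t
  have hdist : ∀ (w : M) (s : unitInterval), dist (w.1 s) (cvx w s) ≤ θ := by
    intro w s
    rw [Subtype.dist_eq, Real.dist_eq]
    show |(w.1 s : ℝ) - ((1-θ) * ((w.1 s : ℝ)) + θ * (s:ℝ))| ≤ θ
    have h1 := (w.1 s).2.1; have h2 := (w.1 s).2.2
    have h3 := s.2.1; have h4 := s.2.2
    rw [abs_le]; constructor <;> nlinarith
  have hkey : cvx u (g t) = cvx m t := (E u).apply_symm_apply ((E m) t)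
  have htri := dist_triangle (u.1 (g t)) (cvx u (g t)) (m.1 t)
  have hd1 : dist (u.1 (g t)) (cvx u (g t)) ≤ θ := hdist u (g t)
  have hd2 : dist (cvx u (g t)) (m.1 t) ≤ θ := by
    rw [hkey, dist_comm]
    exact hdist m t
  have : dist (u.1 (g t)) (m.1 t) ≤ 2 * θ := by linarith
  linarith


lemma aux_nonneg (ρ : M → M → ℝ) (hrefl : ∀ ξ : M, ρ ξ ξ = 0)
    (hsymm : ∀ ξ ζ : M, ρ ξ ζ = ρ ζ ξ)
    (htri : ∀ ξ ζ χ : M, ρ ξ χ ≤ ρ ξ ζ + ρ ζ χ) (a b : M) : 0 ≤ ρ a b := by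
  have h := htri a b a
  rw [hrefl a, hsymm b a] at h
  linarith

lemma aux_phi (x z u : unitInterval → unitInterval) (hxm : Monotone x) (hzm : Monotone z)
    (hxs : Surjective x) (hzs : Surjective z) (hum : Monotone u) (hus : Surjective u)
    (hsum : ∀ s, (x s : ℝ) + (z s : ℝ) = 2 * (u s : ℝ)) :
    ∃ Φ Ψ : unitInterval → unitInterval, Monotone Φ ∧ Monotone Ψ ∧ Continuous Φ ∧ Continuous Ψ ∧
      Surjective Φ ∧ Surjective Ψ ∧ (∀ s, Φ (u s) = x s) ∧ (∀ s, Ψ (u s) = z s) := by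
  have hkey : ∀ s s', u s = u s' → x s = x s' ∧ z s = z s' := by
    have main : ∀ s s', s ≤ s' → u s = u s' → x s = x s' ∧ z s = z s' := by
      intro s s' hle he
      have hx : (x s : ℝ) ≤ x s' := Subtype.coe_le_coe.mpr (hxm hle)
      have hz : (z s : ℝ) ≤ z s' := Subtype.coe_le_coe.mpr (hzm hle)
      have h1 := hsum s; have h2 := hsum s'
      have hu : (u s : ℝ) = u s' := by rw [he]
      constructor <;> apply Subtype.ext <;> linarith
    intro s s' he
    rcases le_total s s' with h | h
    · exact main s s' h he
    · obtain ⟨h1, h2⟩ := main s' s h he.symm; exact ⟨h1.symm, h2.symm⟩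
  set e := surjInv hus with he
  have heu : ∀ v, u (e v) = v := fun v => surjInv_eq hus v
  set Φ : unitInterval → unitInterval := fun v => x (e v) with hΦ
  set Ψ : unitInterval → unitInterval := fun v => z (e v) with hΨ
  have hΦu : ∀ s, Φ (u s) = x s := fun s => (hkey (e (u s)) s (heu (u s))).1
  have hΨu : ∀ s, Ψ (u s) = z s := fun s => (hkey (e (u s)) s (heu (u s))).2
  have hmono : ∀ (w : unitInterval → unitInterval), Monotone w →
      Monotone (fun v => w (e v)) := by
    intro w hwm v v' hvv
    rcases le_total (e v) (e v') with h | h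
    · exact hwm h
    · have h1 : u (e v') ≤ u (e v) := hum h
      rw [heu, heu] at h1
      have : v = v' := le_antisymm hvv h1
      rw [this]
  have hΦm : Monotone Φ := hmono x hxm
  have hΨm : Monotone Ψ := hmono z hzm
  have hΦs : Surjective Φ := by
    intro y; obtain ⟨s, hs⟩ := hxs y; exact ⟨u s, by rw [hΦu s, hs]⟩
  have hΨs : Surjective Ψ := by
    intro y; obtain ⟨s, hs⟩ := hzs y; exact ⟨u s, by rw [hΨu s, hs]⟩
  exact ⟨Φ, Ψ, hΦm, hΨm, hΦm.continuous_of_surjective hΦs,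
    hΨm.continuous_of_surjective hΨs, hΦs, hΨs, hΦu, hΨu⟩

lemma aux_claimA (ρ : M → M → ℝ) (hrefl : ∀ ξ : M, ρ ξ ξ = 0)
    (hsymm : ∀ ξ ζ : M, ρ ξ ζ = ρ ζ ξ)
    (htri : ∀ ξ ζ χ : M, ρ ξ χ ≤ ρ ξ ζ + ρ ζ χ)
    (hcont : Continuous fun p : M × M => ρ p.1 p.2)
    (hinv : ∀ (ξ ζ : M) (g : unitInterval ≃ₜ unitInterval) (hg : Monotone ⇑g),
      ρ (Mcomp ξ g hg) (Mcomp ζ g hg) = ρ ξ ζ)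
    (ξ ζ u : M) (Φ Ψ : unitInterval → unitInterval)
    (hΦc : Continuous Φ) (hΨc : Continuous Ψ)
    (hΦu : ∀ s, Φ (u.1 s) = ξ.1 s) (hΨu : ∀ s, Ψ (u.1 s) = ζ.1 s)
    (h0 : ρ ξ ζ = 0) (m X Y : M)
    (hX : ∀ s, X.1 s = Φ (m.1 s)) (hY : ∀ s, Y.1 s = Ψ (m.1 s)) :
    ρ X Y = 0 := by
  refine le_antisymm ?_ (aux_nonneg ρ hrefl hsymm htri X Y)
  have main : ∀ ε : ℝ, 0 < ε → ρ X Y < ε := by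
    intro ε hε
    have hca : ContinuousAt (fun p : M × M => ρ p.1 p.2) (X, Y) := hcont.continuousAt
    rw [Metric.continuousAt_iff] at hca
    obtain ⟨δ, hδpos, hδ⟩ := hca ε hε
    obtain ⟨η₁, hη₁pos, hΦd⟩ := Metric.uniformContinuous_iff.mp
      (CompactSpace.uniformContinuous_of_continuous hΦc) (δ/2) (by linarith)
    obtain ⟨η₂, hη₂pos, hΨd⟩ := Metric.uniformContinuous_iff.mp
      (CompactSpace.uniformContinuous_of_continuous hΨc) (δ/2) (by linarith)
    obtain ⟨g, hg, happ⟩ := aux_approx u m (lt_min hη₁pos hη₂pos)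
    set A : M := Mcomp ξ g hg with hA
    set B : M := Mcomp ζ g hg with hB
    have hAapp : ∀ t, A.1 t = Φ (u.1 (g t)) := fun t => (hΦu (g t)).symm
    have hBapp : ∀ t, B.1 t = Ψ (u.1 (g t)) := fun t => (hΨu (g t)).symm
    have hdA : dist A X ≤ δ/2 := by
      show dist A.1 X.1 ≤ δ/2
      rw [ContinuousMap.dist_le (by linarith)]
      intro t
      rw [show (A.1 t) = Φ (u.1 (g t)) from hAapp t, show (X.1 t) = Φ (m.1 t) from hX t]
      exact le_of_lt (hΦd (lt_of_lt_of_le (happ t) (min_le_left _ _)))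
    have hdB : dist B Y ≤ δ/2 := by
      show dist B.1 Y.1 ≤ δ/2
      rw [ContinuousMap.dist_le (by linarith)]
      intro t
      rw [show (B.1 t) = Ψ (u.1 (g t)) from hBapp t, show (Y.1 t) = Ψ (m.1 t) from hY t]
      exact le_of_lt (hΨd (lt_of_lt_of_le (happ t) (min_le_right _ _)))
    have hprod : dist ((A, B) : M × M) (X, Y) < δ := by
      rw [Prod.dist_eq]
      exact lt_of_le_of_lt (max_le hdA hdB) (by linarith)
    have := hδ hprod
    have hAB : ρ A B = 0 := by rw [hA, hB, hinv ξ ζ g hg]; exact h0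
    rw [hAB, Real.dist_eq] at this
    have habs := abs_lt.mp this
    linarith [habs.1, habs.2]
  by_contra hcon
  push_neg at hcon
  exact absurd (main (ρ X Y) hcon) (lt_irrefl _)


lemma aux_mid (ξ ζ : M) :
    ∃ u : M, ∀ s, (ξ.1 s : ℝ) + (ζ.1 s : ℝ) = 2 * ((u.1 s : ℝ)) := by
  have mem : ∀ s, ((ξ.1 s : ℝ) + (ζ.1 s : ℝ))/2 ∈ Set.Icc (0:ℝ) 1 := by
    intro s
    have h1 := (ξ.1 s).2.1; have h2 := (ξ.1 s).2.2
    have h3 := (ζ.1 s).2.1; have h4 := (ζ.1 s).2.2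
    constructor <;> [linarith; linarith]
  set uf : unitInterval → unitInterval := fun s => ⟨((ξ.1 s : ℝ) + (ζ.1 s : ℝ))/2, mem s⟩
    with huf
  have hcont : Continuous uf := by
    apply Continuous.subtype_mk
    exact ((continuous_subtype_val.comp ξ.1.continuous).add
      (continuous_subtype_val.comp ζ.1.continuous)).div_const 2
  have hmono : Monotone uf := by
    intro a b hab
    show ((ξ.1 a : ℝ) + (ζ.1 a : ℝ))/2 ≤ ((ξ.1 b : ℝ) + (ζ.1 b : ℝ))/2
    have h1 : (ξ.1 a : ℝ) ≤ ξ.1 b := Subtype.coe_le_coe.mpr (ξ.2.1 hab)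
    have h2 : (ζ.1 a : ℝ) ≤ ζ.1 b := Subtype.coe_le_coe.mpr (ζ.2.1 hab)
    linarith
  have h00 : uf 0 = 0 := by
    have p1 : ξ.1 0 = 0 := aux_bot _ ξ.2.1 ξ.2.2
    have p2 : ζ.1 0 = 0 := aux_bot _ ζ.2.1 ζ.2.2
    apply Subtype.ext
    show ((ξ.1 0 : ℝ) + (ζ.1 0 : ℝ))/2 = ((0:unitInterval):ℝ)
    rw [p1, p2]; simp
  have h11 : uf 1 = 1 := by
    have p1 : ξ.1 1 = 1 := aux_top _ ξ.2.1 ξ.2.2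
    have p2 : ζ.1 1 = 1 := aux_top _ ζ.2.1 ζ.2.2
    apply Subtype.ext
    show ((ξ.1 1 : ℝ) + (ζ.1 1 : ℝ))/2 = ((1:unitInterval):ℝ)
    rw [p1, p2]; norm_num
  refine ⟨⟨⟨uf, hcont⟩, hmono, aux_surj uf hcont h00 h11⟩, fun s => ?_⟩
  show (ξ.1 s : ℝ) + (ζ.1 s : ℝ) = 2 * (((ξ.1 s : ℝ) + (ζ.1 s : ℝ))/2)
  ring

lemma aux_mk (Φ : unitInterval → unitInterval) (hc : Continuous Φ) (hm : Monotone Φ)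
    (hs : Surjective Φ) (m : M) : ∃ X : M, ∀ s, X.1 s = Φ (m.1 s) :=
  ⟨⟨⟨fun s => Φ (m.1 s), hc.comp m.1.continuous⟩, fun a b h => hm (m.2.1 h),
    hs.comp m.2.2⟩, fun _ => rfl⟩

lemma aux_mkM (mf : unitInterval → unitInterval) (hc : Continuous mf) (hm : Monotone mf)
    (hs : Surjective mf) : ∃ X : M, ∀ s, X.1 s = mf s :=
  ⟨⟨⟨mf, hc⟩, hm, hs⟩, fun _ => rfl⟩

lemma aux_key (ρ : M → M → ℝ) (hrefl : ∀ ξ : M, ρ ξ ξ = 0)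
    (hsymm : ∀ ξ ζ : M, ρ ξ ζ = ρ ζ ξ)
    (htri : ∀ ξ ζ χ : M, ρ ξ χ ≤ ρ ξ ζ + ρ ζ χ)
    (hcont : Continuous fun p : M × M => ρ p.1 p.2)
    (hinv : ∀ (ξ ζ : M) (g : unitInterval ≃ₜ unitInterval) (hg : Monotone ⇑g),
      ρ (Mcomp ξ g hg) (Mcomp ζ g hg) = ρ ξ ζ)
    {α β γ δ : ℝ} (h1 : IsGap ρ α β) (h2 : IsGap ρ γ δ) (hγβ : γ < β) (hαδ : α < δ) :
    IsGap ρ α δ := by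
  obtain ⟨hα0, hαβ, hβ1, ξ₁, ζ₁, h01, hsep₁⟩ := h1
  obtain ⟨hγ0, hγδ, hδ1, ξ₂, ζ₂, h02, hsep₂⟩ := h2
  obtain ⟨s₁, hs₁a, hs₁b⟩ := aux_point _ _ ξ₁.1.continuous ζ₁.1.continuous
    (aux_bot _ ξ₁.2.1 ξ₁.2.2) (aux_top _ ζ₁.2.1 ζ₁.2.2) hα0 hβ1 hsep₁
  obtain ⟨s₂, hs₂a, hs₂b⟩ := aux_point _ _ ξ₂.1.continuous ζ₂.1.continuous
    (aux_bot _ ξ₂.2.1 ξ₂.2.2) (aux_top _ ζ₂.2.1 ζ₂.2.2) hγ0 hδ1 hsep₂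
  obtain ⟨u₁, hu₁⟩ := aux_mid ξ₁ ζ₁
  obtain ⟨u₂, hu₂⟩ := aux_mid ξ₂ ζ₂
  obtain ⟨Φ₁, Ψ₁, hΦ₁m, hΨ₁m, hΦ₁c, hΨ₁c, hΦ₁s, hΨ₁s, hΦ₁u, hΨ₁u⟩ :=
    aux_phi (fun s => ξ₁.1 s) (fun s => ζ₁.1 s) (fun s => u₁.1 s)
      ξ₁.2.1 ζ₁.2.1 ξ₁.2.2 ζ₁.2.2 u₁.2.1 u₁.2.2 hu₁
  obtain ⟨Φ₂, Ψ₂, hΦ₂m, hΨ₂m, hΦ₂c, hΨ₂c, hΦ₂s, hΨ₂s, hΦ₂u, hΨ₂u⟩ :=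
    aux_phi (fun s => ξ₂.1 s) (fun s => ζ₂.1 s) (fun s => u₂.1 s)
      ξ₂.2.1 ζ₂.2.1 ξ₂.2.2 ζ₂.2.2 u₂.2.1 u₂.2.2 hu₂
  -- pushout of Ψ₁ against Φ₂
  have hf0 : Ψ₁ 0 = 0 := aux_bot _ hΨ₁m hΨ₁s
  have hg0 : Φ₂ 0 = 0 := aux_bot _ hΦ₂m hΦ₂s
  have hf1 : Ψ₁ 1 = 1 := aux_top _ hΨ₁m hΨ₁s
  have hg1 : Φ₂ 1 = 1 := aux_top _ hΦ₂m hΦ₂s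
  set t₁ : unitInterval := u₁.1 s₁ with ht₁
  set t₂ : unitInterval := u₂.1 s₂ with ht₂
  have hlt : (Φ₂ t₂ : ℝ) < (Ψ₁ t₁ : ℝ) := by
    have e1 : Φ₂ t₂ = ξ₂.1 s₂ := hΦ₂u s₂
    have e2 : Ψ₁ t₁ = ζ₁.1 s₁ := hΨ₁u s₁
    rw [e1, e2]
    linarith
  set mf : unitInterval → unitInterval :=
    fun s => ⟨mr Ψ₁ Φ₂ s, ⟨mr_nonneg hf0 hg0 s, mr_le_one hf0 hg0 s⟩⟩ with hmf
  set mf' : unitInterval → unitInterval :=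
    fun s => ⟨mr Φ₂ Ψ₁ s, ⟨mr_nonneg hg0 hf0 s, mr_le_one hg0 hf0 s⟩⟩ with hmf'
  have hmfc : Continuous mf :=
    Continuous.subtype_mk (mr_cont hΨ₁m hΦ₂m hΦ₂s hf0 hg0) _
  have hmf'c : Continuous mf' :=
    Continuous.subtype_mk (mr_cont hΦ₂m hΨ₁m hΨ₁s hg0 hf0) _
  have hmfm : Monotone mf := fun a b h => Subtype.mk_le_mk.mpr (mr_mono hf0 hg0 h)
  have hmf'm : Monotone mf' := fun a b h => Subtype.mk_le_mk.mpr (mr_mono hg0 hf0 h)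
  have hmf0 : mf 0 = 0 := Subtype.ext (by
    show mr Ψ₁ Φ₂ 0 = ((0:unitInterval):ℝ); rw [mr_zero hf0 hg0]; simp)
  have hmf1 : mf 1 = 1 := Subtype.ext (by
    show mr Ψ₁ Φ₂ 1 = ((1:unitInterval):ℝ); rw [mr_one hf0 hg0 hf1 hg1]; simp)
  have hmf'0 : mf' 0 = 0 := Subtype.ext (by
    show mr Φ₂ Ψ₁ 0 = ((0:unitInterval):ℝ); rw [mr_zero hg0 hf0]; simp)
  have hmf'1 : mf' 1 = 1 := Subtype.ext (by
    show mr Φ₂ Ψ₁ 1 = ((1:unitInterval):ℝ); rw [mr_one hg0 hf0 hg1 hf1]; simp)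
  have hmfs : Surjective mf := aux_surj mf hmfc hmf0 hmf1
  have hmf's : Surjective mf' := aux_surj mf' hmf'c hmf'0 hmf'1
  have hcomb : ∀ s, Ψ₁ (mf s) = Φ₂ (mf' s) := fun s =>
    mr_comb hΨ₁c hΦ₂c hΨ₁m hΦ₂m hf0 hg0 s rfl rfl
  -- the marked point
  have hsmem : ((t₁:ℝ) + (t₂:ℝ))/2 ∈ Set.Icc (0:ℝ) 1 := by
    have a1 := t₁.2.1; have a2 := t₁.2.2; have b1 := t₂.2.1; have b2 := t₂.2.2
    constructor <;> [linarith; linarith]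
  set sstar : unitInterval := ⟨((t₁:ℝ) + (t₂:ℝ))/2, hsmem⟩ with hsstar
  have hple : mr Ψ₁ Φ₂ sstar ≤ (t₁:ℝ) := by
    apply mr_pt_le hΨ₁m hΦ₂m hf0 hg0 hlt
    show 2 * (((t₁:ℝ) + (t₂:ℝ))/2) ≤ (t₁:ℝ) + (t₂:ℝ)
    linarith
  have hpge : (t₂:ℝ) ≤ mr Φ₂ Ψ₁ sstar := by
    apply mr_pt_ge hΨ₁m hΨ₁s hlt
    show (t₁:ℝ) + (t₂:ℝ) ≤ 2 * (((t₁:ℝ) + (t₂:ℝ))/2)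
    linarith
  -- bundle everything into M
  obtain ⟨mM, hmM⟩ := aux_mkM mf hmfc hmfm hmfs
  obtain ⟨m'M, hm'M⟩ := aux_mkM mf' hmf'c hmf'm hmf's
  obtain ⟨X, hXe⟩ := aux_mk Φ₁ hΦ₁c hΦ₁m hΦ₁s mM
  obtain ⟨C, hCe⟩ := aux_mk Ψ₁ hΨ₁c hΨ₁m hΨ₁s mM
  obtain ⟨C', hC'e⟩ := aux_mk Φ₂ hΦ₂c hΦ₂m hΦ₂s m'M
  obtain ⟨Y, hYe⟩ := aux_mk Ψ₂ hΨ₂c hΨ₂m hΨ₂s m'M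
  have hXC : ρ X C = 0 := aux_claimA ρ hrefl hsymm htri hcont hinv ξ₁ ζ₁ u₁ Φ₁ Ψ₁
    hΦ₁c hΨ₁c hΦ₁u hΨ₁u h01 mM X C hXe hCe
  have hC'Y : ρ C' Y = 0 := aux_claimA ρ hrefl hsymm htri hcont hinv ξ₂ ζ₂ u₂ Φ₂ Ψ₂
    hΦ₂c hΨ₂c hΦ₂u hΨ₂u h02 m'M C' Y hC'e hYe
  have hCC' : C = C' := by
    apply Subtype.ext; apply ContinuousMap.ext; intro s
    rw [hCe s, hC'e s, hmM s, hm'M s]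
    exact hcomb s
  have hCY : ρ C Y = 0 := by rw [hCC']; exact hC'Y
  have hρ : ρ X Y = 0 := by
    have h := htri X C Y
    rw [hXC, hCY] at h
    exact le_antisymm (by linarith) (aux_nonneg ρ hrefl hsymm htri X Y)
  -- separation at sstar
  have hmle : mf sstar ≤ t₁ := Subtype.mk_le_mk.mpr hple
  have hmge : t₂ ≤ mf' sstar := by
    show (t₂:ℝ) ≤ mr Φ₂ Ψ₁ sstar
    exact hpge
  have hXs : (X.1 sstar : ℝ) ≤ α := by
    have e1 : X.1 sstar = Φ₁ (mf sstar) := by rw [hXe sstar, hmM sstar]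
    have e2 : Φ₁ (mf sstar) ≤ Φ₁ t₁ := hΦ₁m hmle
    have e3 : Φ₁ t₁ = ξ₁.1 s₁ := hΦ₁u s₁
    rw [e1]
    calc ((Φ₁ (mf sstar) : ℝ)) ≤ ((Φ₁ t₁ : ℝ)) := e2
      _ = (ξ₁.1 s₁ : ℝ) := by rw [e3]
      _ ≤ α := hs₁a
  have hYs : δ ≤ (Y.1 sstar : ℝ) := by
    have e1 : Y.1 sstar = Ψ₂ (mf' sstar) := by rw [hYe sstar, hm'M sstar]
    have e2 : Ψ₂ t₂ ≤ Ψ₂ (mf' sstar) := hΨ₂m hmge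
    have e3 : Ψ₂ t₂ = ζ₂.1 s₂ := hΨ₂u s₂
    rw [e1]
    calc δ ≤ (ζ₂.1 s₂ : ℝ) := hs₂b
      _ = ((Ψ₂ t₂ : ℝ)) := by rw [e3]
      _ ≤ ((Ψ₂ (mf' sstar) : ℝ)) := e2
  refine ⟨hα0, hαδ, hδ1, X, Y, hρ, ?_⟩
  intro s
  rcases le_total s sstar with h | h
  · left
    calc (X.1 s : ℝ) ≤ (X.1 sstar : ℝ) := Subtype.coe_le_coe.mpr (X.2.1 h)
      _ ≤ α := hXs
  · right
    calc δ ≤ (Y.1 sstar : ℝ) := hYs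
      _ ≤ (Y.1 s : ℝ) := Subtype.coe_le_coe.mpr (Y.2.1 h)

/-- The union of two intersecting `ρ`-gaps is a `ρ`-gap, for any continuous
`Homeo⁺[0,1]`-invariant pseudometric `ρ` on `𝔐`. -/
theorem stmt_14
    (ρ : M → M → ℝ)
    (hrefl : ∀ ξ : M, ρ ξ ξ = 0)
    (hsymm : ∀ ξ ζ : M, ρ ξ ζ = ρ ζ ξ)
    (htri : ∀ ξ ζ χ : M, ρ ξ χ ≤ ρ ξ ζ + ρ ζ χ)
    (hcont : Continuous fun p : M × M => ρ p.1 p.2)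
    (hinv : ∀ (ξ ζ : M) (g : unitInterval ≃ₜ unitInterval) (hg : Monotone ⇑g),
      ρ (Mcomp ξ g hg) (Mcomp ζ g hg) = ρ ξ ζ)
    (α β γ δ : ℝ) (h1 : IsGap ρ α β) (h2 : IsGap ρ γ δ)
    (hint : max α γ < min β δ) :
    IsGap ρ (min α γ) (max β δ) := by
  have hαδ : α < δ := lt_of_lt_of_le (lt_of_le_of_lt (le_max_left α γ) hint) (min_le_right β δ)
  have hγβ : γ < β := lt_of_lt_of_le (lt_of_le_of_lt (le_max_right α γ) hint) (min_le_left β δ)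
  rcases le_total α γ with hac | hca <;> rcases le_total β δ with hbd | hdb
  · rw [min_eq_left hac, max_eq_right hbd]
    exact aux_key ρ hrefl hsymm htri hcont hinv h1 h2 hγβ hαδ
  · rw [min_eq_left hac, max_eq_left hdb]
    exact h1
  · rw [min_eq_right hca, max_eq_right hbd]
    exact h2
  · rw [min_eq_right hca, max_eq_left hdb]
    exact aux_key ρ hrefl hsymm htri hcont hinv h2 h1 hαδ hγβ
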